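/- For every k ≥ 2, every vertex of V(G_k) not belonging to the generation U_{k-1} has a neighbor in U_{k-1} in the Apollonian network G_k. -/

import Mathlib

/-- A family of Apollonian networks, given by a vertex set `Vert` together with a
generation labeling `gen` and an adjacency relation `adj`, satisfying the recursive
construction: the first generation `U₁` consists of three pairwise adjacent vertices
(forming `G₁`); and for each `k ≥ 1`, for each vertex `u` of generation `k` and each
adjacent pair `{x, y}` of neighbors of `u` in `G_k`, exactly one new vertex of
generation `k + 1` is created, adjacent to exactly `u`, `x`, and `y`.
The `k`-th Apollonian network `G_k` is the induced subgraph on the vertices of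
generation at most `k`. -/
structure ApollonianNetwork where
  Vert : Type
  adj : Vert → Vert → Prop
  adj_symm : ∀ a b, adj a b → adj b a
  adj_irrefl : ∀ a, ¬ adj a a
  gen : Vert → ℕ
  gen_pos : ∀ v, 1 ≤ gen v
  /-- The first generation consists of exactly three vertices. -/
  U1_card : ∃ a b c : Vert, a ≠ b ∧ a ≠ c ∧ b ≠ c ∧ {v | gen v = 1} = {a, b, c}
  /-- `G₁` is a complete graph on the first generation. -/
  U1_complete : ∀ a b, gen a = 1 → gen b = 1 → a ≠ b → adj a b
  /-- All edges join vertices of distinct generations, except within generation 1. -/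
  adj_gen : ∀ a b, adj a b → gen a = gen b → gen a = 1
  /-- Every vertex `v` of generation `k ≥ 2` is adjacent, among the vertices of earlier
  generations, to exactly three vertices `u`, `x`, `y`, where `u` has generation `k - 1`
  and `x`, `y` are neighbors of `u` in `G_{k-1}` that are adjacent to each other. -/
  created : ∀ v, 2 ≤ gen v → ∃ u x y,
    gen u = gen v - 1 ∧ gen x ≤ gen v - 1 ∧ gen y ≤ gen v - 1 ∧
    adj u x ∧ adj u y ∧ adj x y ∧
    {w | adj v w ∧ gen w < gen v} = {u, x, y}
  /-- For each `k ≥ 1`, each vertex `u` of generation `k`, and each adjacent pair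
  `{x, y}` of neighbors of `u` in `G_k`, there is exactly one vertex of generation
  `k + 1` whose neighbors in `G_{k+1}` are exactly `u`, `x`, and `y`. -/
  attach : ∀ k, 1 ≤ k → ∀ u x y,
    gen u = k → gen x ≤ k → gen y ≤ k → x ≠ y →
    adj u x → adj u y → adj x y →
    ∃! v, gen v = k + 1 ∧ {w | adj v w ∧ gen w ≤ k} = ({u, x, y} : Set Vert)

/-- The `k`-th Apollonian network `G_k`: the induced subgraph on the vertices of
generation at most `k`. -/
def ApollonianNetwork.G (A : ApollonianNetwork) (k : ℕ) :
    SimpleGraph {v : A.Vert // A.gen v ≤ k} where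
  Adj a b := A.adj a b
  symm := ⟨fun a b h => A.adj_symm a b h⟩
  loopless := ⟨fun a h => A.adj_irrefl a h⟩

lemma ApollonianNetwork.adj_ne (A : ApollonianNetwork) {a b : A.Vert} (h : A.adj a b) :
    a ≠ b := by
  rintro rfl; exact A.adj_irrefl a h

/-- Every vertex of generation at most `j` lies in a triangle of `G_j` containing
a vertex of generation exactly `j`. -/
lemma ApollonianNetwork.key (A : ApollonianNetwork) : ∀ j, 1 ≤ j → ∀ v, A.gen v ≤ j →
    ∃ u x y, A.gen u = j ∧ A.gen x ≤ j ∧ A.gen y ≤ j ∧ x ≠ y ∧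
      A.adj u x ∧ A.adj u y ∧ A.adj x y ∧ v ∈ ({u, x, y} : Set A.Vert) := by
  intro j
  induction j with
  | zero => omega
  | succ j ih =>
    intro _ v hv
    by_cases hj1 : j = 0
    · subst hj1
      obtain ⟨a, b, c, hab, hac, hbc, hU⟩ := A.U1_card
      have hga : A.gen a = 1 := by
        have : a ∈ {v | A.gen v = 1} := by rw [hU]; left; rfl
        exact this
      have hgb : A.gen b = 1 := by
        have : b ∈ {v | A.gen v = 1} := by rw [hU]; right; left; rfl
        exact this
      have hgc : A.gen c = 1 := by
        have : c ∈ {v | A.gen v = 1} := by rw [hU]; right; right; rfl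
        exact this
      have hgv : A.gen v = 1 := le_antisymm hv (A.gen_pos v)
      have hvmem : v ∈ ({a, b, c} : Set A.Vert) := by
        rw [← hU]; exact hgv
      exact ⟨a, b, c, hga, hgb.le, hgc.le, hbc,
        A.U1_complete _ _ hga hgb hab, A.U1_complete _ _ hga hgc hac,
        A.U1_complete _ _ hgb hgc hbc, hvmem⟩
    · have hj' : 1 ≤ j := by omega
      by_cases hvj : A.gen v ≤ j
      · obtain ⟨u, x, y, hu, hx, hy, hxy, hux, huy, hxy', hvmem⟩ := ih hj' v hvj
        obtain ⟨w, ⟨hw, hwset⟩, -⟩ := A.attach j hj' u x y hu hx hy hxy hux huy hxy'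
        have hmem : ∀ z, z ∈ ({u, x, y} : Set A.Vert) → A.adj w z := by
          intro z hz
          rw [← hwset] at hz
          exact hz.1
        have hwu : A.adj w u := hmem u (by left; rfl)
        have hwx : A.adj w x := hmem x (by right; left; rfl)
        have hwy : A.adj w y := hmem y (by right; right; rfl)
        rcases hvmem with rfl | rfl | rfl
        · exact ⟨w, v, x, hw, by omega, by omega, A.adj_ne hux, hwu, hwx, hux,
            by right; left; rfl⟩
        · exact ⟨w, u, v, hw, by omega, by omega, A.adj_ne hux, hwu, hwx, hux,
            by right; right; rfl⟩
        · exact ⟨w, u, v, hw, by omega, by omega, A.adj_ne huy, hwu, hwy, huy,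
            by right; right; rfl⟩
      · have hgv : A.gen v = j + 1 := by omega
        obtain ⟨u, x, y, hu, hx, hy, hux, huy, hxy, hset⟩ := A.created v (by omega)
        have hvu : A.adj v u := by
          have : u ∈ {w | A.adj v w ∧ A.gen w < A.gen v} := by rw [hset]; left; rfl
          exact this.1
        have hvx : A.adj v x := by
          have : x ∈ {w | A.adj v w ∧ A.gen w < A.gen v} := by
            rw [hset]; right; left; rfl
          exact this.1
        exact ⟨v, u, x, hgv, by omega, by omega, A.adj_ne hux, hvu, hvx, hux,
          by left; rfl⟩

theorem stmt11 (A : ApollonianNetwork) (k : ℕ) (hk : 2 ≤ k) :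
    ∀ v : A.Vert, A.gen v ≤ k → A.gen v ≠ k - 1 →
      ∃ u : A.Vert, A.gen u = k - 1 ∧ A.adj v u := by
  intro v hv hne
  by_cases hvk : A.gen v = k
  · obtain ⟨u, x, y, hu, -, -, -, -, -, hset⟩ := A.created v (by omega)
    have : u ∈ {w | A.adj v w ∧ A.gen w < A.gen v} := by rw [hset]; left; rfl
    exact ⟨u, by omega, this.1⟩
  · have h1 := A.gen_pos v
    have hle : A.gen v ≤ k - 2 := by omega
    obtain ⟨u, x, y, hu, hx, hy, hxy, hux, huy, hxy', hvmem⟩ :=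
      A.key (k - 2) (by omega) v hle
    obtain ⟨w, ⟨hw, hwset⟩, -⟩ :=
      A.attach (k - 2) (by omega) u x y hu hx hy hxy hux huy hxy'
    have hwv : A.adj w v := by
      have : v ∈ {w' | A.adj w w' ∧ A.gen w' ≤ k - 2} := by rw [hwset]; exact hvmem
      exact this.1
    exact ⟨w, by omega, A.adj_symm _ _ hwv⟩
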